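/- arXiv:1304.2096 — 4 statements merged into one kernel-verified Lean document; each statement's English description precedes it below -/
import Mathlib

section
/- Let $E$ be a normed space and suppose $1 \le p \le q_1 < q < q_2 < \infty$ with $1/q = (1-\theta)/q_1 + \theta/q_2$ for some $\theta \in (0,1)$. Then for all $n$, $\pi^{(n)}_{q,p}(E) \le (\pi^{(n)}_{q_1,p}(E))^{1-\theta} \cdot (\pi^{(n)}_{q_2,p}(E))^{\theta}$. -/
open scoped BigOperators

/-- The weak `p`-summing norm of a tuple in a complex normed space. -/
noncomputable def weakSummingNorm {E : Type*} [NormedAddCommGroup E] [NormedSpace ℂ E]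
    (p : ℝ) {n : ℕ} (x : Fin n → E) : ℝ :=
  sSup {s : ℝ | ∃ lam : E →L[ℂ] ℂ, ‖lam‖ ≤ 1 ∧ s = (∑ i, ‖lam (x i)‖ ^ p) ^ (1 / p)}

/-- The `(q,p)`-summing constant `π^{(n)}_{q,p}(E)` of a normed space `E`. -/
noncomputable def summingConstant (E : Type*) [NormedAddCommGroup E] [NormedSpace ℂ E]
    (q p : ℝ) (n : ℕ) : ℝ :=
  sSup {s : ℝ | ∃ x : Fin n → E, weakSummingNorm p x ≤ 1 ∧ s = (∑ i, ‖x i‖ ^ q) ^ (1 / q)}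

lemma norm_le_one_of_weak {E : Type*} [NormedAddCommGroup E] [NormedSpace ℂ E]
    {p : ℝ} (hp : 0 < p) {n : ℕ} {x : Fin n → E}
    (hx : weakSummingNorm p x ≤ 1) (i : Fin n) : ‖x i‖ ≤ 1 := by
  rcases eq_or_ne (x i) 0 with h | h
  · simp [h]
  obtain ⟨g, hg1, hg2⟩ := exists_dual_vector ℂ (x i) (norm_ne_zero_iff.mpr h)
  have hbdd : BddAbove {s : ℝ | ∃ lam : E →L[ℂ] ℂ, ‖lam‖ ≤ 1 ∧
      s = (∑ j, ‖lam (x j)‖ ^ p) ^ (1 / p)} := by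
    refine ⟨(∑ j, ‖x j‖ ^ p) ^ (1 / p), ?_⟩
    rintro s ⟨lam, hlam, rfl⟩
    apply Real.rpow_le_rpow (by positivity) ?_ (by positivity)
    refine Finset.sum_le_sum fun j _ => ?_
    apply Real.rpow_le_rpow (norm_nonneg _) ?_ hp.le
    calc ‖lam (x j)‖ ≤ ‖lam‖ * ‖x j‖ := lam.le_opNorm _
      _ ≤ 1 * ‖x j‖ := by gcongr
      _ = ‖x j‖ := one_mul _
  have hmem : (∑ j, ‖g (x j)‖ ^ p) ^ (1 / p) ∈ {s : ℝ | ∃ lam : E →L[ℂ] ℂ, ‖lam‖ ≤ 1 ∧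
      s = (∑ j, ‖lam (x j)‖ ^ p) ^ (1 / p)} := ⟨g, hg1.le, rfl⟩
  have hle := le_csSup hbdd hmem
  have hgx : ‖g (x i)‖ = ‖x i‖ := by rw [hg2]; simp
  have h1 : ‖x i‖ ≤ (∑ j, ‖g (x j)‖ ^ p) ^ (1 / p) := by
    have heq : (‖x i‖ ^ p) ^ (1 / p) = ‖x i‖ := by
      rw [← Real.rpow_mul (norm_nonneg _), mul_one_div, div_self hp.ne', Real.rpow_one]
    rw [← heq]
    apply Real.rpow_le_rpow (by positivity) ?_ (by positivity)
    rw [← hgx]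
    exact Finset.single_le_sum (f := fun j => ‖g (x j)‖ ^ p)
      (fun j _ => by positivity) (Finset.mem_univ i)
  exact h1.trans (hle.trans hx)

theorem stmt7 (E : Type*) [NormedAddCommGroup E] [NormedSpace ℂ E]
    (p q q₁ q₂ θ : ℝ) (hp : 1 ≤ p) (hpq₁ : p ≤ q₁) (hq₁ : q₁ < q) (hq₂ : q < q₂)
    (hθ₀ : 0 < θ) (hθ₁ : θ < 1) (hq : 1 / q = (1 - θ) / q₁ + θ / q₂) (n : ℕ) :
    summingConstant E q p n ≤
      (summingConstant E q₁ p n) ^ (1 - θ) * (summingConstant E q₂ p n) ^ θ := by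
  have hp0 : 0 < p := lt_of_lt_of_le zero_lt_one hp
  have hq10 : 0 < q₁ := lt_of_lt_of_le hp0 hpq₁
  have hq0 : 0 < q := hq10.trans hq₁
  have hq20 : 0 < q₂ := hq0.trans hq₂
  have h1θ : 0 < 1 - θ := by linarith
  have hS₁0 : 0 ≤ summingConstant E q₁ p n :=
    Real.sSup_nonneg (by rintro s ⟨x, _, rfl⟩; positivity)
  have hS₂0 : 0 ≤ summingConstant E q₂ p n :=
    Real.sSup_nonneg (by rintro s ⟨x, _, rfl⟩; positivity)
  apply Real.sSup_le ?_ (by positivity)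
  rintro s ⟨x, hx, rfl⟩
  have hbdd : ∀ r : ℝ, 0 < r → BddAbove {s : ℝ | ∃ x : Fin n → E,
      weakSummingNorm p x ≤ 1 ∧ s = (∑ i, ‖x i‖ ^ r) ^ (1 / r)} := by
    intro r hr
    refine ⟨(n : ℝ) ^ (1 / r), ?_⟩
    rintro s ⟨y, hy, rfl⟩
    apply Real.rpow_le_rpow (by positivity) ?_ (by positivity)
    calc ∑ i, ‖y i‖ ^ r ≤ ∑ _i : Fin n, (1 : ℝ) :=
          Finset.sum_le_sum fun i _ =>
            Real.rpow_le_one (norm_nonneg _) (norm_le_one_of_weak hp0 hy i) hr.le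
      _ = n := by simp
  have hA : (∑ i, ‖x i‖ ^ q₁) ^ (1 / q₁) ≤ summingConstant E q₁ p n :=
    le_csSup (hbdd q₁ hq10) ⟨x, hx, rfl⟩
  have hB : (∑ i, ‖x i‖ ^ q₂) ^ (1 / q₂) ≤ summingConstant E q₂ p n :=
    le_csSup (hbdd q₂ hq20) ⟨x, hx, rfl⟩
  -- interpolation
  set r : ℝ := q₁ / ((1 - θ) * q) with hr_def
  set r' : ℝ := q₂ / (θ * q) with hr'_def
  have hrq : (1 - θ) * q < q₁ := by
    have h1 : (1 - θ) / q₁ < 1 / q := by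
      have : 0 < θ / q₂ := by positivity
      linarith
    rw [div_lt_div_iff₀ hq10 hq0] at h1
    linarith
  have hr1 : 1 < r := (one_lt_div (by positivity)).2 hrq
  have e1 : 1 / r = q * ((1 - θ) / q₁) := by rw [hr_def, one_div_div]; ring
  have e2 : 1 / r' = q * (θ / q₂) := by rw [hr'_def, one_div_div]; ring
  have hconj : Real.HolderConjugate r r' := by
    refine Real.holderConjugate_iff.mpr ⟨hr1, ?_⟩
    rw [← one_div, ← one_div, e1, e2, ← mul_add, ← hq, mul_one_div, div_self hq0.ne']
  have hold := Real.inner_le_Lp_mul_Lq_of_nonneg (f := fun i => ‖x i‖ ^ ((1 - θ) * q))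
    (g := fun i => ‖x i‖ ^ (θ * q)) Finset.univ hconj
    (fun i _ => by positivity) (fun i _ => by positivity)
  have hfg : ∀ i : Fin n, ‖x i‖ ^ ((1 - θ) * q) * ‖x i‖ ^ (θ * q) = ‖x i‖ ^ q := fun i => by
    rw [← Real.rpow_add' (norm_nonneg _) (by rw [show (1 - θ) * q + θ * q = q by ring]; exact hq0.ne')]
    congr 1; ring
  have hfr : ∀ i : Fin n, (‖x i‖ ^ ((1 - θ) * q)) ^ r = ‖x i‖ ^ q₁ := fun i => by
    rw [← Real.rpow_mul (norm_nonneg _)]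
    congr 1
    rw [hr_def]
    field_simp
  have hgr : ∀ i : Fin n, (‖x i‖ ^ (θ * q)) ^ r' = ‖x i‖ ^ q₂ := fun i => by
    rw [← Real.rpow_mul (norm_nonneg _)]
    congr 1
    rw [hr'_def]
    field_simp
  simp only [hfg, hfr, hgr] at hold
  have hkey : (∑ i, ‖x i‖ ^ q) ^ (1 / q) ≤
      ((∑ i, ‖x i‖ ^ q₁) ^ (1 / q₁)) ^ (1 - θ) * ((∑ i, ‖x i‖ ^ q₂) ^ (1 / q₂)) ^ θ := by
    calc (∑ i, ‖x i‖ ^ q) ^ (1 / q)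
        ≤ ((∑ i, ‖x i‖ ^ q₁) ^ (1 / r) * (∑ i, ‖x i‖ ^ q₂) ^ (1 / r')) ^ (1 / q) :=
          Real.rpow_le_rpow (by positivity) hold (by positivity)
      _ = ((∑ i, ‖x i‖ ^ q₁) ^ (1 / q₁)) ^ (1 - θ) * ((∑ i, ‖x i‖ ^ q₂) ^ (1 / q₂)) ^ θ := by
          rw [Real.mul_rpow (by positivity) (by positivity),
            ← Real.rpow_mul (by positivity), ← Real.rpow_mul (by positivity),
            ← Real.rpow_mul (by positivity), ← Real.rpow_mul (by positivity)]
          congr 1 <;> congr 1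
          · rw [e1]; field_simp
          · rw [e2]; field_simp
  refine hkey.trans ?_
  have hA0 : 0 ≤ (∑ i, ‖x i‖ ^ q₁) ^ (1 / q₁) := by positivity
  have hB0 : 0 ≤ (∑ i, ‖x i‖ ^ q₂) ^ (1 / q₂) := by positivity
  exact mul_le_mul (Real.rpow_le_rpow hA0 hA h1θ.le) (Real.rpow_le_rpow hB0 hB hθ₀.le)
    (Real.rpow_nonneg hB0 _) (Real.rpow_nonneg hS₁0 _)
end

section
/- Let $1 \le p < \infty$ and let $(x_1,\dots,x_n)$ be an orthogonal $n$-tuple in a Hilbert space $H$. If $p \ge 2$ then $\mu_{p,n}(x_1,\dots,x_n) = \max_i \|x_i\|$; if $1 < p < 2$ then, with $1/r = 1/p - 1/2$, $\mu_{p,n}(x_1,\dots,x_n) = (\sum_{i=1}^n \|x_i\|^r)^{1/r}$; and if $p = 1$ then $\mu_{1,n}(x_1,\dots,x_n) = (\sum_{i=1}^n \|x_i\|^2)^{1/2}$. -/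
open scoped BigOperators ComplexInnerProductSpace

section Helpers
variable {H : Type*} [NormedAddCommGroup H] [InnerProductSpace ℂ H] {n : ℕ}

lemma orth_inner_single (x : Fin n → H) (hx : ∀ i j, i ≠ j → ⟪x i, x j⟫ = 0)
    (c : Fin n → ℂ) (i : Fin n) :
    ⟪∑ j, c j • x j, x i⟫ = (starRingEnd ℂ) (c i) * ((‖x i‖ : ℂ)) ^ 2 := by
  rw [sum_inner, Finset.sum_eq_single i]
  · rw [inner_smul_left, inner_self_eq_norm_sq_to_K]
    rfl
  · intro b _ hb
    rw [inner_smul_left, hx b i hb, mul_zero]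
  · simp

lemma orth_norm_sum_sq (x : Fin n → H) (hx : ∀ i j, i ≠ j → ⟪x i, x j⟫ = 0)
    (c : Fin n → ℂ) :
    ‖∑ j, c j • x j‖ ^ 2 = ∑ i, ‖c i‖ ^ 2 * ‖x i‖ ^ 2 := by
  rw [norm_sq_eq_re_inner (𝕜 := ℂ), inner_sum]
  have h : ∀ i : Fin n, ⟪∑ j, c j • x j, c i • x i⟫ = ((‖c i‖^2 * ‖x i‖^2 : ℝ) : ℂ) := by
    intro i
    rw [inner_smul_right, orth_inner_single x hx, ← mul_assoc, mul_comm (c i),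
      Complex.conj_mul']
    push_cast
    norm_cast
  simp only [h]
  rw [← Complex.ofReal_sum]; exact Complex.ofReal_re _

end Helpers

section B
variable {H : Type*} [NormedAddCommGroup H] [InnerProductSpace ℂ H] {n : ℕ}

lemma bessel_orth (x : Fin n → H) (hx : ∀ i j, i ≠ j → ⟪x i, x j⟫ = 0)
    (lam : H →L[ℂ] ℂ) (hlam : ‖lam‖ ≤ 1) :
    ∑ i, (‖lam (x i)‖ / ‖x i‖) ^ 2 ≤ 1 := by
  classical
  set c : Fin n → ℂ := fun i => (starRingEnd ℂ) (lam (x i)) / ((‖x i‖ : ℂ)) ^ 2 with hc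
  set y := ∑ j, c j • x j with hy
  set T : ℝ := ∑ i, (‖lam (x i)‖ / ‖x i‖) ^ 2 with hT
  have hT0 : 0 ≤ T := Finset.sum_nonneg fun i _ => sq_nonneg _
  have hterm : ∀ i, ‖c i‖ ^ 2 * ‖x i‖ ^ 2 = (‖lam (x i)‖ / ‖x i‖) ^ 2 := by
    intro i
    by_cases hai : ‖x i‖ = 0
    · have hx0 : x i = 0 := norm_eq_zero.mp hai
      simp [hc, hx0]
    · have hcn : ‖c i‖ = ‖lam (x i)‖ / ‖x i‖ ^ 2 := by
        rw [hc]
        simp [norm_div]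
      rw [hcn]
      field_simp
  have hyn : ‖y‖ ^ 2 = T := by
    rw [hy, orth_norm_sum_sq x hx, hT]
    exact Finset.sum_congr rfl fun i _ => hterm i
  have hlamy : lam y = (T : ℂ) := by
    rw [hy, map_sum, hT]
    push_cast
    refine Finset.sum_congr rfl fun i _ => ?_
    rw [map_smul, smul_eq_mul, hc]
    by_cases hai : ‖x i‖ = 0
    · have hx0 : x i = 0 := norm_eq_zero.mp hai
      simp [hx0]
    · simp only []
      rw [div_mul_eq_mul_div, Complex.conj_mul', div_pow]
  have h1 : T = ‖lam y‖ := by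
    rw [hlamy, Complex.norm_real, Real.norm_eq_abs, abs_of_nonneg hT0]
  have h2 : ‖lam y‖ ≤ ‖y‖ := by
    calc ‖lam y‖ ≤ ‖lam‖ * ‖y‖ := lam.le_opNorm y
    _ ≤ 1 * ‖y‖ := by
        have := norm_nonneg y
        nlinarith
    _ = ‖y‖ := one_mul _
  have h3 : ‖y‖ = Real.sqrt T := by
    rw [← hyn]
    exact (Real.sqrt_sq (norm_nonneg y)).symm
  have h4 : T ≤ Real.sqrt T := by rw [← h3]; exact h1.symm ▸ (h1 ▸ h2)
  nlinarith [Real.sq_sqrt hT0, Real.sqrt_nonneg T, sq_nonneg (Real.sqrt T - 1)]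

end B

section Opt

lemma opt_ge2 {n : ℕ} {p : ℝ} (hp : 2 ≤ p) (t a : Fin n → ℝ)
    (ht : ∀ i, 0 ≤ t i) (ha : ∀ i, 0 ≤ a i) (hz : ∀ i, a i = 0 → t i = 0)
    (hb : ∑ i, (t i / a i) ^ 2 ≤ 1) {M : ℝ} (hM0 : 0 ≤ M) (hM : ∀ i, a i ≤ M) :
    ∑ i, t i ^ p ≤ M ^ p := by
  have hp0 : p ≠ 0 := by linarith
  have key : ∀ i, t i ^ p ≤ M ^ p * (t i / a i) ^ 2 := by
    intro i
    by_cases hai : a i = 0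
    · rw [hz i hai, Real.zero_rpow hp0]
      positivity
    · have hai' : 0 < a i := lt_of_le_of_ne (ha i) (Ne.symm hai)
      have hu0 : 0 ≤ t i / a i := div_nonneg (ht i) (ha i)
      have hu1 : t i / a i ≤ 1 := by
        have h1 : (t i / a i) ^ 2 ≤ 1 :=
          le_trans (Finset.single_le_sum (fun j _ => sq_nonneg (t j / a j))
            (Finset.mem_univ i)) hb
        nlinarith
      have ht' : t i ^ p = a i ^ p * (t i / a i) ^ p := by
        rw [← Real.mul_rpow (ha i) hu0]
        congr 1
        field_simp
      rw [ht']
      have h2 : (t i / a i) ^ p ≤ (t i / a i) ^ 2 := by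
        rcases eq_or_lt_of_le hu0 with h | h
        · rw [← h, Real.zero_rpow hp0]
          positivity
        · calc (t i / a i) ^ p ≤ (t i / a i) ^ (2 : ℝ) :=
                Real.rpow_le_rpow_of_exponent_ge h hu1 hp
            _ = (t i / a i) ^ 2 := by
                rw [show ((2:ℝ) = ((2:ℕ):ℝ)) by norm_num, Real.rpow_natCast]
      exact mul_le_mul (Real.rpow_le_rpow (ha i) (hM i) (by linarith)) h2
        (by positivity) (by positivity)
  calc ∑ i, t i ^ p ≤ ∑ i, M ^ p * (t i / a i) ^ 2 := Finset.sum_le_sum fun i _ => key i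
    _ = M ^ p * ∑ i, (t i / a i) ^ 2 := by rw [Finset.mul_sum]
    _ ≤ M ^ p * 1 := mul_le_mul_of_nonneg_left hb (by positivity)
    _ = M ^ p := mul_one _

lemma opt_lt2 {n : ℕ} {p r : ℝ} (hp1 : 1 ≤ p) (hp2 : p < 2) (hr : r = 2 * p / (2 - p))
    (t a : Fin n → ℝ)
    (ht : ∀ i, 0 ≤ t i) (ha : ∀ i, 0 ≤ a i) (hz : ∀ i, a i = 0 → t i = 0)
    (hb : ∑ i, (t i / a i) ^ 2 ≤ 1) :
    ∑ i, t i ^ p ≤ (∑ i, a i ^ r) ^ ((2 - p) / 2) := by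
  have hp0 : p ≠ 0 := by linarith
  have h2p : (0:ℝ) < 2 - p := by linarith
  have hq : Real.HolderConjugate (2 / (2 - p)) (2 / p) := by
    rw [Real.holderConjugate_iff]
    constructor
    · rw [lt_div_iff₀ h2p]; linarith
    · rw [show ((2:ℝ)/(2-p))⁻¹ = (2-p)/2 by field_simp, show ((2:ℝ)/p)⁻¹ = p/2 by field_simp]
      ring
  have key := Real.inner_le_Lp_mul_Lq Finset.univ (fun i => a i ^ p)
    (fun i => (t i / a i) ^ p) hq
  have e1 : ∀ i : Fin n, t i ^ p = a i ^ p * (t i / a i) ^ p := by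
    intro i
    by_cases hai : a i = 0
    · rw [hz i hai, hai]
      simp [Real.zero_rpow hp0]
    · have hai' : 0 < a i := lt_of_le_of_ne (ha i) (Ne.symm hai)
      rw [← Real.mul_rpow (ha i) (div_nonneg (ht i) (ha i))]
      congr 1
      field_simp
  have e2 : ∀ i : Fin n, |a i ^ p| ^ ((2:ℝ) / (2 - p)) = a i ^ r := by
    intro i
    rw [abs_of_nonneg (Real.rpow_nonneg (ha i) p), ← Real.rpow_mul (ha i)]
    congr 1
    rw [hr]; ring
  have e3 : ∀ i : Fin n, |(t i / a i) ^ p| ^ ((2:ℝ) / p) = (t i / a i) ^ 2 := by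
    intro i
    have hu0 : 0 ≤ t i / a i := div_nonneg (ht i) (ha i)
    rw [abs_of_nonneg (Real.rpow_nonneg hu0 p), ← Real.rpow_mul hu0,
      show p * (2 / p) = ((2:ℕ):ℝ) by field_simp; norm_num, Real.rpow_natCast]
  have hF : (∑ i, |a i ^ p| ^ ((2:ℝ) / (2 - p))) ^ (1 / ((2:ℝ) / (2 - p)))
      = (∑ i, a i ^ r) ^ ((2 - p) / 2) := by
    rw [one_div_div]
    congr 1
    exact Finset.sum_congr rfl fun i _ => e2 i
  have hG : (∑ i, |(t i / a i) ^ p| ^ ((2:ℝ) / p)) ^ (1 / ((2:ℝ) / p)) ≤ 1 := by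
    apply Real.rpow_le_one (Finset.sum_nonneg fun i _ => by positivity)
    · calc ∑ i, |(t i / a i) ^ p| ^ ((2:ℝ) / p) = ∑ i, (t i / a i) ^ 2 :=
            Finset.sum_congr rfl fun i _ => e3 i
        _ ≤ 1 := hb
    · positivity
  calc ∑ i, t i ^ p = ∑ i, a i ^ p * (t i / a i) ^ p :=
        Finset.sum_congr rfl fun i _ => e1 i
    _ ≤ (∑ i, |a i ^ p| ^ ((2:ℝ) / (2 - p))) ^ (1 / ((2:ℝ) / (2 - p))) *
        (∑ i, |(t i / a i) ^ p| ^ ((2:ℝ) / p)) ^ (1 / ((2:ℝ) / p)) := key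
    _ = (∑ i, a i ^ r) ^ ((2 - p) / 2) *
        (∑ i, |(t i / a i) ^ p| ^ ((2:ℝ) / p)) ^ (1 / ((2:ℝ) / p)) := by rw [hF]
    _ ≤ (∑ i, a i ^ r) ^ ((2 - p) / 2) * 1 :=
        mul_le_mul_of_nonneg_left hG
          (Real.rpow_nonneg (Finset.sum_nonneg fun i _ => Real.rpow_nonneg (ha i) r) _)
    _ = (∑ i, a i ^ r) ^ ((2 - p) / 2) := mul_one _

end Opt

lemma sSup_eq_of_mem_of_ub {A : Set ℝ} {v : ℝ} (hv : v ∈ A) (hub : ∀ s ∈ A, s ≤ v) :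
    sSup A = v :=
  le_antisymm (csSup_le ⟨v, hv⟩ hub) (le_csSup ⟨v, fun s hs => hub s hs⟩ hv)

section Main
variable {H : Type*} [NormedAddCommGroup H] [InnerProductSpace ℂ H] {n : ℕ}

lemma wsn_ge2 (p : ℝ) (hp : 1 ≤ p) (hp2 : 2 ≤ p) (x : Fin n → H)
    (hx : ∀ i j, i ≠ j → ⟪x i, x j⟫ = 0) :
    weakSummingNorm p x = ⨆ i, ‖x i‖ := by
  have hp0 : p ≠ 0 := by linarith
  set M : ℝ := ⨆ i, ‖x i‖ with hMdef
  have hbdd : BddAbove (Set.range fun i => ‖x i‖) := Set.Finite.bddAbove (Set.finite_range _)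
  have hM : ∀ i, ‖x i‖ ≤ M := fun i => le_ciSup hbdd i
  have hM0 : 0 ≤ M := by
    by_cases h : Nonempty (Fin n)
    · obtain ⟨i⟩ := h
      exact le_trans (norm_nonneg _) (hM i)
    · haveI := not_nonempty_iff.mp h
      rw [hMdef, Real.iSup_of_isEmpty]
  apply sSup_eq_of_mem_of_ub
  · -- membership
    by_cases hM' : M = 0
    · refine ⟨0, by simp, ?_⟩
      rw [hM']
      simp [Real.zero_rpow hp0, Real.zero_rpow (inv_ne_zero hp0),
        Real.zero_rpow (one_div_ne_zero hp0)]
    · have hne : Nonempty (Fin n) := by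
        by_contra h
        haveI := not_nonempty_iff.mp h
        exact hM' (by rw [hMdef, Real.iSup_of_isEmpty])
      obtain ⟨j, hj⟩ := exists_eq_ciSup_of_finite (f := fun i => ‖x i‖)
      have hj0 : 0 < ‖x j‖ := by
        rw [hj, ← hMdef]
        exact lt_of_le_of_ne hM0 (Ne.symm hM')
      set c : ℂ := ((‖x j‖⁻¹ : ℝ) : ℂ) with hcdef
      refine ⟨innerSL ℂ (c • x j), ?_, ?_⟩
    
      · rw [innerSL_apply_norm, norm_smul, hcdef, Complex.norm_real, Real.norm_eq_abs,
          abs_of_nonneg (inv_nonneg.mpr hj0.le), inv_mul_cancel₀ (ne_of_gt hj0)]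
      · have hval : ∀ i, ‖(innerSL ℂ (c • x j)) (x i)‖ ^ p
            = if i = j then ‖x j‖ ^ p else 0 := by
          intro i
          by_cases hij : i = j
          · subst hij
            rw [if_pos rfl]
            congr 1
            have hv : (innerSL ℂ (c • x i)) (x i) = ((‖x i‖ : ℝ) : ℂ) := by
              rw [innerSL_apply_apply, inner_smul_left, inner_self_eq_norm_sq_to_K, hcdef,
                Complex.conj_ofReal]
              have hne0 : ((‖x i‖ : ℝ) : ℂ) ≠ 0 := by
                exact_mod_cast Complex.ofReal_ne_zero.mpr (ne_of_gt hj0)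
              rw [Complex.ofReal_inv, pow_two, ← mul_assoc]
              exact (congrArg (· * ((‖x i‖ : ℝ) : ℂ)) (inv_mul_cancel₀ hne0)).trans (one_mul _)
            rw [hv, Complex.norm_real, Real.norm_eq_abs, abs_of_nonneg hj0.le]
          · rw [if_neg hij, innerSL_apply_apply, inner_smul_left, hx j i (fun h => hij h.symm),
              mul_zero, norm_zero, Real.zero_rpow hp0]
        rw [Finset.sum_congr rfl fun i _ => hval i, Finset.sum_ite_eq' Finset.univ j,
          if_pos (Finset.mem_univ j), ← Real.rpow_mul (norm_nonneg _), mul_one_div,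
          div_self hp0, Real.rpow_one, hMdef, hj]
  · -- upper bound
    rintro s ⟨lam, hlam, rfl⟩
    have hb := bessel_orth x hx lam hlam
    have hopt := opt_ge2 hp2 (fun i => ‖lam (x i)‖) (fun i => ‖x i‖)
      (fun i => norm_nonneg _) (fun i => norm_nonneg _)
      (fun i hi => by
        have hxi : x i = 0 := norm_eq_zero.mp hi
        simp [hxi]) hb hM0 hM
    calc (∑ i, ‖lam (x i)‖ ^ p) ^ (1 / p) ≤ (M ^ p) ^ (1 / p) :=
          Real.rpow_le_rpow (Finset.sum_nonneg fun i _ => Real.rpow_nonneg (norm_nonneg _) p)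
            hopt (by positivity)
      _ = M := by
          rw [← Real.rpow_mul hM0, mul_one_div, div_self hp0, Real.rpow_one]

end Main

section Main2
variable {H : Type*} [NormedAddCommGroup H] [InnerProductSpace ℂ H] {n : ℕ}

lemma wsn_lt2 (p r : ℝ) (hp1 : 1 ≤ p) (hp2 : p < 2) (hr : 1 / r = 1 / p - 1 / 2)
    (x : Fin n → H) (hx : ∀ i j, i ≠ j → ⟪x i, x j⟫ = 0) :
    weakSummingNorm p x = (∑ i, ‖x i‖ ^ r) ^ (1 / r) := by
  have hp0 : (0:ℝ) < p := by linarith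
  have hp0' : p ≠ 0 := ne_of_gt hp0
  have h2p : (0:ℝ) < 2 - p := by linarith
  have hrinv : 0 < 1 / r := by
    rw [hr, sub_pos, div_lt_div_iff₀ (by norm_num : (0:ℝ) < 2) hp0]
    linarith
  have hrpos : 0 < r := by
    by_contra h
    push_neg at h
    have h2 := inv_nonpos.mpr h
    rw [one_div] at hrinv
    linarith
  have hr0 : r ≠ 0 := ne_of_gt hrpos
  have hr' : 1 / r = (2 - p) / (2 * p) := by
    rw [hr]
    field_simp
  have hre : r = 2 * p / (2 - p) := by
    have h3 : r = 1 / (1 / r) := (one_div_one_div r).symm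
    rw [hr', one_div_div] at h3
    exact h3
  have hexp : (2 - p) / 2 * (1 / p) = 1 / r := by
    rw [hr]
    field_simp
  set S : ℝ := ∑ i, ‖x i‖ ^ r with hSdef
  have hS0 : 0 ≤ S := Finset.sum_nonneg fun i _ => Real.rpow_nonneg (norm_nonneg _) r
  apply sSup_eq_of_mem_of_ub
  · -- membership
    by_cases hS : S = 0
    · refine ⟨0, by simp, ?_⟩
      rw [hS]
      simp [Real.zero_rpow hp0', Real.zero_rpow (inv_ne_zero hp0'),
        Real.zero_rpow (one_div_ne_zero hp0'), Real.zero_rpow (ne_of_gt hrinv),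
        Real.zero_rpow (inv_ne_zero hr0), Real.zero_rpow (one_div_ne_zero hr0)]
    · have hSpos : 0 < S := lt_of_le_of_ne hS0 (Ne.symm hS)
      set c : Fin n → ℂ := fun i => ((‖x i‖ ^ (r / 2 - 1) / Real.sqrt S : ℝ) : ℂ) with hcdef
      set y : H := ∑ i, c i • x i with hydef
      have hcn : ∀ i, ‖c i‖ = ‖x i‖ ^ (r / 2 - 1) / Real.sqrt S := by
        intro i
        rw [hcdef]
        rw [Complex.norm_real, Real.norm_eq_abs, abs_of_nonneg (by positivity)]
      have hterm : ∀ i, ‖c i‖ ^ 2 * ‖x i‖ ^ 2 = ‖x i‖ ^ r / S := by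
        intro i
        by_cases hai : ‖x i‖ = 0
        · rw [hai, Real.zero_rpow hr0]
          simp
        · have hpos : 0 < ‖x i‖ := lt_of_le_of_ne (norm_nonneg _) (Ne.symm hai)
          rw [hcn i, div_pow, Real.sq_sqrt hS0]
          rw [← Real.rpow_natCast (‖x i‖ ^ (r / 2 - 1)) 2, ← Real.rpow_mul (norm_nonneg _),
            div_mul_eq_mul_div, ← Real.rpow_natCast (‖x i‖) 2,
            ← Real.rpow_add hpos]
          congr 2
          push_cast
          ring
      have hy2 : ‖y‖ ^ 2 = 1 := by
        rw [hydef, orth_norm_sum_sq x hx c, Finset.sum_congr rfl fun i _ => hterm i,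
          ← Finset.sum_div, ← hSdef, div_self hS]
      have hy1 : ‖y‖ = 1 := by
        rw [← Real.sqrt_sq (norm_nonneg y), hy2, Real.sqrt_one]
      refine ⟨innerSL ℂ y, by rw [innerSL_apply_norm, hy1], ?_⟩
      have hval : ∀ i, ‖(innerSL ℂ y) (x i)‖ ^ p = ‖x i‖ ^ r / S ^ (p / 2) := by
        intro i
        rw [innerSL_apply_apply, hydef, orth_inner_single x hx c i, norm_mul, RCLike.norm_conj,
          hcn i, norm_pow, Complex.norm_real, Real.norm_eq_abs, abs_of_nonneg (norm_nonneg _)]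
        by_cases hai : ‖x i‖ = 0
        · rw [hai]
          rw [Real.zero_rpow hr0]
          norm_num
          rw [Real.zero_rpow hp0']
        · have hpos : 0 < ‖x i‖ := lt_of_le_of_ne (norm_nonneg _) (Ne.symm hai)
          rw [div_mul_eq_mul_div, ← Real.rpow_natCast (‖x i‖) 2, ← Real.rpow_add hpos,
            Real.div_rpow (by positivity) (Real.sqrt_nonneg _),
            ← Real.rpow_mul (norm_nonneg _), Real.sqrt_eq_rpow, ← Real.rpow_mul hS0]
          congr 2
          · push_cast
            rw [hre]
            field_simp
            ring
          · ring
      rw [Finset.sum_congr rfl fun i _ => hval i, ← Finset.sum_div, ← hSdef]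
      have hSS : S / S ^ (p / 2) = S ^ ((2 - p) / 2) := by
        rw [show S / S ^ (p / 2) = S ^ (1:ℝ) / S ^ (p / 2) by rw [Real.rpow_one],
          ← Real.rpow_sub hSpos]
        norm_num
        ring_nf
      rw [hSS, ← Real.rpow_mul hS0, hexp]
  · -- upper bound
    rintro s ⟨lam, hlam, rfl⟩
    have hb := bessel_orth x hx lam hlam
    have hopt := opt_lt2 hp1 hp2 hre (fun i => ‖lam (x i)‖) (fun i => ‖x i‖)
      (fun i => norm_nonneg _) (fun i => norm_nonneg _)
      (fun i hi => by
        have hxi : x i = 0 := norm_eq_zero.mp hi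
        simp [hxi]) hb
    calc (∑ i, ‖lam (x i)‖ ^ p) ^ (1 / p)
        ≤ (S ^ ((2 - p) / 2)) ^ (1 / p) :=
          Real.rpow_le_rpow (Finset.sum_nonneg fun i _ => Real.rpow_nonneg (norm_nonneg _) p)
            hopt (by positivity)
      _ = S ^ (1 / r) := by rw [← Real.rpow_mul hS0, hexp]

end Main2

theorem stmt11 {H : Type*} [NormedAddCommGroup H] [InnerProductSpace ℂ H]
    (p : ℝ) (hp : 1 ≤ p) (n : ℕ) (x : Fin n → H)
    (hx : ∀ i j, i ≠ j → ⟪x i, x j⟫ = 0) :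
    (2 ≤ p → weakSummingNorm p x = ⨆ i, ‖x i‖) ∧
    (∀ r : ℝ, 1 < p → p < 2 → 1 / r = 1 / p - 1 / 2 →
      weakSummingNorm p x = (∑ i, ‖x i‖ ^ r) ^ (1 / r)) ∧
    (p = 1 → weakSummingNorm p x = (∑ i, ‖x i‖ ^ (2 : ℝ)) ^ ((1 : ℝ) / 2)) := by
  refine ⟨fun h2 => wsn_ge2 p hp h2 x hx,
    fun r h1 h2 h3 => wsn_lt2 p r hp h2 h3 x hx,
    fun h1 => ?_⟩
  subst h1
  exact wsn_lt2 1 2 le_rfl (by norm_num) (by norm_num) x hx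
end

section
/- In the real Hilbert space $\mathbb{R}^3$ with vectors $y_1 = \frac{1}{\sqrt{11}}(1,0,0)$, $y_2 = \frac{1}{\sqrt{11}}(1,1,0)$, $y_3 = \frac{1}{\sqrt{11}}(-1,2,1)$, one has $\sup\{\|t_1 y_1 + t_2 y_2 + t_3 y_3\| : t_1,t_2,t_3 \in \{-1,1\}\} = 1$, and $(y_1,y_2,y_3)$ is an extreme point of the set $L = \{(z_1,z_2,z_3) \in (\mathbb{R}^3)^3 : \|t_1 z_1 + t_2 z_2 + t_3 z_3\| \le 1 \text{ for all } t_i \in \{-1,1\}\}$, yet $\{y_1,y_2,y_3\}$ is not an orthogonal set. -/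
open scoped BigOperators RealInnerProductSpace

private lemma normsq3 (w : EuclideanSpace ℝ (Fin 3)) :
    ‖w‖ ^ 2 = (w 0) ^ 2 + (w 1) ^ 2 + (w 2) ^ 2 := by
  rw [EuclideanSpace.norm_eq, Real.sq_sqrt (by positivity)]
  simp [Fin.sum_univ_three, Real.norm_eq_abs, sq_abs]

theorem stmt15 (y : Fin 3 → EuclideanSpace ℝ (Fin 3))
    (hy0 : y 0 = (Real.sqrt 11)⁻¹ • (WithLp.equiv 2 (Fin 3 → ℝ)).symm ![1, 0, 0])
    (hy1 : y 1 = (Real.sqrt 11)⁻¹ • (WithLp.equiv 2 (Fin 3 → ℝ)).symm ![1, 1, 0])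
    (hy2 : y 2 = (Real.sqrt 11)⁻¹ • (WithLp.equiv 2 (Fin 3 → ℝ)).symm ![-1, 2, 1]) :
    sSup {s : ℝ | ∃ t : Fin 3 → ℝ, (∀ i, t i = 1 ∨ t i = -1) ∧ s = ‖∑ i, t i • y i‖} = 1 ∧
    y ∈ Set.extremePoints ℝ
      {z : Fin 3 → EuclideanSpace ℝ (Fin 3) |
        ∀ t : Fin 3 → ℝ, (∀ i, t i = 1 ∨ t i = -1) → ‖∑ i, t i • z i‖ ≤ 1} ∧
    ¬ (∀ i j, i ≠ j → ⟪y i, y j⟫ = 0) := by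
  have hs11 : (0:ℝ) < Real.sqrt 11 := Real.sqrt_pos.mpr (by norm_num)
  have hsq : Real.sqrt 11 ^ 2 = 11 := Real.sq_sqrt (by norm_num)
  have hw : ∀ t : Fin 3 → ℝ, ‖∑ i, t i • y i‖ ^ 2 =
      ((t 0 + t 1 - t 2) ^ 2 + (t 1 + 2 * t 2) ^ 2 + (t 2) ^ 2) / 11 := by
    intro t
    rw [normsq3]
    simp only [Fin.sum_univ_three, hy0, hy1, hy2, PiLp.add_apply, PiLp.smul_apply,
      WithLp.equiv_symm_apply, PiLp.toLp_apply, smul_eq_mul]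
    simp only [Matrix.cons_val_zero, Matrix.cons_val_one, Matrix.head_cons,
      Matrix.cons_val_two, Matrix.tail_cons]
    field_simp
    ring_nf
    rw [hsq]
    ring
  have hle : ∀ t : Fin 3 → ℝ, (∀ i, t i = 1 ∨ t i = -1) → ‖∑ i, t i • y i‖ ≤ 1 := by
    intro t ht
    have h2 : ‖∑ i, t i • y i‖ ^ 2 ≤ 1 := by
      rw [hw]
      rcases ht 0 with h0 | h0 <;> rcases ht 1 with h1 | h1 <;> rcases ht 2 with h2 | h2 <;>
        rw [h0, h1, h2] <;> norm_num
    nlinarith [norm_nonneg (∑ i, t i • y i)]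
  have heq : ∀ t : Fin 3 → ℝ, (t 0 + t 1 - t 2) ^ 2 + (t 1 + 2 * t 2) ^ 2 + (t 2) ^ 2 = 11 →
      ‖∑ i, t i • y i‖ = 1 := by
    intro t h
    have h2 : ‖∑ i, t i • y i‖ ^ 2 = 1 := by rw [hw, h]; norm_num
    nlinarith [norm_nonneg (∑ i, t i • y i)]
  refine ⟨?_, ?_, ?_⟩
  · apply IsGreatest.csSup_eq
    constructor
    · refine ⟨fun _ => 1, fun i => Or.inl rfl, ?_⟩
      rw [heq (fun _ => 1) (by norm_num)]
    · rintro s ⟨t, ht, rfl⟩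
      exact hle t ht
  · constructor
    · intro t ht
      exact hle t ht
    · rintro x₁ hx₁ x₂ hx₂ ⟨a, b, ha, hb, hab, hy⟩
      have key : ∀ t : Fin 3 → ℝ, (∀ i, t i = 1 ∨ t i = -1) →
          (t 0 + t 1 - t 2) ^ 2 + (t 1 + 2 * t 2) ^ 2 + (t 2) ^ 2 = 11 →
          ∑ i, t i • x₁ i = ∑ i, t i • x₂ i := by
        intro t ht hval
        by_contra hne
        have hlt := norm_combo_lt_of_ne (hx₁ t ht) (hx₂ t ht) hne ha hb hab
        have hsum : ∑ i, t i • y i = a • ∑ i, t i • x₁ i + b • ∑ i, t i • x₂ i := by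
          rw [← hy]
          simp only [Fin.sum_univ_three, Pi.add_apply, Pi.smul_apply, smul_add, smul_smul]
          module
        rw [← hsum, heq t hval] at hlt
        exact absurd hlt (lt_irrefl 1)
      have e1 := key ![1, 1, 1] (by intro i; fin_cases i <;> norm_num) (by norm_num [Matrix.cons_val_two, Matrix.tail_cons, Matrix.head_cons])
      have e2 := key ![1, 1, -1] (by intro i; fin_cases i <;> norm_num) (by norm_num [Matrix.cons_val_two, Matrix.tail_cons, Matrix.head_cons])
      have e3 := key ![1, -1, -1] (by intro i; fin_cases i <;> norm_num) (by norm_num [Matrix.cons_val_two, Matrix.tail_cons, Matrix.head_cons])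
      simp only [Fin.sum_univ_three, Matrix.cons_val_zero, Matrix.cons_val_one, Matrix.head_cons,
        Matrix.cons_val_two, Matrix.tail_cons, one_smul, neg_smul] at e1 e2 e3
      have hx12 : x₁ = x₂ := by
        have c2 : x₁ 2 = x₂ 2 := by
          have : (2:ℝ) • x₁ 2 = (2:ℝ) • x₂ 2 := by
            linear_combination (norm := module) e1 - e2
          exact smul_right_injective _ (two_ne_zero) this
        have c1 : x₁ 1 = x₂ 1 := by
          have : (2:ℝ) • x₁ 1 = (2:ℝ) • x₂ 1 := by
            linear_combination (norm := module) e1 - e3 - (2:ℝ) • c2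
          exact smul_right_injective _ (two_ne_zero) this
        have c0 : x₁ 0 = x₂ 0 := by
          have : x₁ 0 + x₁ 1 + x₁ 2 = x₂ 0 + x₂ 1 + x₂ 2 := e1
          rw [c1, c2] at this
          exact add_right_cancel (add_right_cancel this)
        funext i
        fin_cases i <;> assumption
      have hx1y : x₁ = y := by
        rw [← hy, hx12, ← add_smul, hab, one_smul]
      exact hx1y
  · intro h
    have h01 := h 0 1 (by norm_num)
    rw [hy0, hy1] at h01
    simp only [PiLp.inner_apply, PiLp.smul_apply, WithLp.equiv_symm_apply, PiLp.toLp_apply,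
      RCLike.inner_apply, Fin.sum_univ_three, smul_eq_mul, Matrix.cons_val_zero,
      Matrix.cons_val_one, Matrix.head_cons, Matrix.cons_val_two, Matrix.tail_cons,
      conj_trivial] at h01
    have : (Real.sqrt 11)⁻¹ * (Real.sqrt 11)⁻¹ ≠ 0 := by positivity
    apply this
    nlinarith [h01]
end

section
/- Let $H$ be a complex Hilbert space, $y_1,y_2,y_3 \in H$, and suppose $(\xi_1,\xi_2,\xi_3) \in \mathbb{T}^3$ maximizes $(\eta_1,\eta_2,\eta_3) \mapsto \|\eta_1 y_1 + \eta_2 y_2 + \eta_3 y_3\|$ over $\mathbb{T}^3$. Then $\operatorname{Im}\langle \xi_1 y_1, \xi_2 y_2 \rangle = \operatorname{Im}\langle \xi_2 y_2, \xi_3 y_3 \rangle = \operatorname{Im}\langle \xi_3 y_3, \xi_1 y_1 \rangle$. -/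
open scoped ComplexInnerProductSpace

lemma aux16 {H : Type*} [NormedAddCommGroup H] [InnerProductSpace ℂ H]
    (x v : H) (h : ∀ u : ℂ, ‖u‖ = 1 → ‖u • x + v‖ ≤ ‖x + v‖) :
    (⟪x, v⟫ : ℂ).im = 0 := by
  set c : ℂ := ⟪x, v⟫ with hc
  by_cases h0 : c = 0
  · simp [h0]
  · have habs : (0:ℝ) < ‖c‖ := norm_pos_iff.mpr h0
    set u : ℂ := c / ‖c‖ with hu
    have hu1 : ‖u‖ = 1 := by
      rw [hu, norm_div]
      simp only [Complex.norm_real, Real.norm_eq_abs, abs_of_pos habs]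
      exact div_self habs.ne'
    have hle := h u hu1
    have hsq : ‖u • x + v‖ ^ 2 ≤ ‖x + v‖ ^ 2 :=
      pow_le_pow_left₀ (norm_nonneg _) hle 2
    have e1 : ‖u • x + v‖ ^ 2 = ‖x‖ ^ 2 + 2 * (RCLike.re (⟪u • x, v⟫ : ℂ)) + ‖v‖ ^ 2 := by
      rw [@norm_add_sq ℂ, norm_smul, hu1, one_mul]
    have e2 : ‖x + v‖ ^ 2 = ‖x‖ ^ 2 + 2 * (RCLike.re (c : ℂ)) + ‖v‖ ^ 2 := by
      rw [@norm_add_sq ℂ, hc]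
    have einner : (⟪u • x, v⟫ : ℂ) = (starRingEnd ℂ) u * c := by
      rw [inner_smul_left, hc]
    have hne : (‖c‖ : ℂ) ≠ 0 := by
      exact_mod_cast habs.ne'
    have hn : (Complex.normSq c : ℂ) = (‖c‖ : ℂ) ^ 2 := by
      rw [Complex.normSq_eq_norm_sq]; push_cast; ring
    have hval : (starRingEnd ℂ) u * c = (‖c‖ : ℂ) := by
      rw [hu, map_div₀, Complex.conj_ofReal, div_mul_eq_mul_div,
        ← Complex.normSq_eq_conj_mul_self, hn, sq, mul_div_assoc, div_self hne, mul_one]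
    have key : ‖c‖ ≤ c.re := by
      rw [e1, e2, einner, hval] at hsq
      simp [RCLike.re_to_complex] at hsq
      linarith
    have h2 : c.re ≤ ‖c‖ := by
      exact Complex.re_le_norm c
    have h3 : ‖c‖ = c.re := by
      linarith
    have h4 := Complex.sq_norm c
    rw [Complex.normSq_apply, h3] at h4
    nlinarith

theorem stmt16 {H : Type*} [NormedAddCommGroup H] [InnerProductSpace ℂ H]
    (y₁ y₂ y₃ : H) (ξ₁ ξ₂ ξ₃ : ℂ) (hξ₁ : ‖ξ₁‖ = 1) (hξ₂ : ‖ξ₂‖ = 1) (hξ₃ : ‖ξ₃‖ = 1)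
    (hmax : ∀ η₁ η₂ η₃ : ℂ, ‖η₁‖ = 1 → ‖η₂‖ = 1 → ‖η₃‖ = 1 →
      ‖η₁ • y₁ + η₂ • y₂ + η₃ • y₃‖ ≤ ‖ξ₁ • y₁ + ξ₂ • y₂ + ξ₃ • y₃‖) :
    (⟪ξ₁ • y₁, ξ₂ • y₂⟫).im = (⟪ξ₂ • y₂, ξ₃ • y₃⟫).im ∧
    (⟪ξ₂ • y₂, ξ₃ • y₃⟫).im = (⟪ξ₃ • y₃, ξ₁ • y₁⟫).im := by
  set x₁ := ξ₁ • y₁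
  set x₂ := ξ₂ • y₂
  set x₃ := ξ₃ • y₃
  have h1 : (⟪x₁, x₂ + x₃⟫ : ℂ).im = 0 := by
    apply aux16
    intro u hu
    have := hmax (u * ξ₁) ξ₂ ξ₃ (by rw [norm_mul, hu, hξ₁, one_mul]) hξ₂ hξ₃
    simpa [x₁, x₂, x₃, mul_smul, add_assoc] using this
  have h2 : (⟪x₂, x₁ + x₃⟫ : ℂ).im = 0 := by
    apply aux16
    intro u hu
    have := hmax ξ₁ (u * ξ₂) ξ₃ hξ₁ (by rw [norm_mul, hu, hξ₂, one_mul]) hξ₃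
    have e : u • x₂ + (x₁ + x₃) = ξ₁ • y₁ + (u * ξ₂) • y₂ + ξ₃ • y₃ := by
      simp only [x₁, x₂, x₃, mul_smul]; abel
    have e' : x₂ + (x₁ + x₃) = ξ₁ • y₁ + ξ₂ • y₂ + ξ₃ • y₃ := by
      simp only [x₁, x₂, x₃]; abel
    rw [e, e']; exact this
  have h3 : (⟪x₃, x₁ + x₂⟫ : ℂ).im = 0 := by
    apply aux16
    intro u hu
    have := hmax ξ₁ ξ₂ (u * ξ₃) hξ₁ hξ₂ (by rw [norm_mul, hu, hξ₃, one_mul])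
    have e : u • x₃ + (x₁ + x₂) = ξ₁ • y₁ + ξ₂ • y₂ + (u * ξ₃) • y₃ := by
      simp only [x₁, x₂, x₃, mul_smul]; abel
    have e' : x₃ + (x₁ + x₂) = ξ₁ • y₁ + ξ₂ • y₂ + ξ₃ • y₃ := by
      simp only [x₁, x₂, x₃]; abel
    rw [e, e']; exact this
  rw [inner_add_right, Complex.add_im] at h1 h2 h3
  have s12 : (⟪x₂, x₁⟫ : ℂ).im = -(⟪x₁, x₂⟫ : ℂ).im := by
    have h := congrArg Complex.im (inner_conj_symm (𝕜 := ℂ) x₁ x₂)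
    rw [Complex.conj_im] at h; linarith
  have s13 : (⟪x₃, x₁⟫ : ℂ).im = -(⟪x₁, x₃⟫ : ℂ).im := by
    have h := congrArg Complex.im (inner_conj_symm (𝕜 := ℂ) x₁ x₃)
    rw [Complex.conj_im] at h; linarith
  have s23 : (⟪x₃, x₂⟫ : ℂ).im = -(⟪x₂, x₃⟫ : ℂ).im := by
    have h := congrArg Complex.im (inner_conj_symm (𝕜 := ℂ) x₂ x₃)
    rw [Complex.conj_im] at h; linarith
  constructor <;> linarith
end
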